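/- As formal power series in q: Z(2) = [2], Z(3) = 2·[3], and Z(4) = [4] - (1/6)·[2]. -/

import Mathlib

open PowerSeries

/-- Sum of a family of power series over positive integers, coefficientwise. -/
noncomputable def psum (f : ℕ → ℚ⟦X⟧) : ℚ⟦X⟧ :=
  PowerSeries.mk fun m => ∑ n ∈ Finset.Icc 1 m, PowerSeries.coeff m (f n)

/-- Double sum over pairs of positive integers, coefficientwise. -/
noncomputable def psum2 (f : ℕ → ℕ → ℚ⟦X⟧) : ℚ⟦X⟧ :=
  PowerSeries.mk fun m => ∑ p ∈ Finset.Icc 1 m ×ˢ Finset.Icc 1 m,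
    PowerSeries.coeff m (f p.1 p.2)

/-- `[s] = (1/(s-1)!)·∑_{n,d≥1} d^{s-1} q^{nd}`. -/
noncomputable def bracket (s : ℕ) : ℚ⟦X⟧ :=
  (1 / ((s - 1).factorial : ℚ)) • psum2 fun n d => ((d : ℚ) ^ (s - 1)) • X ^ (n * d)

noncomputable def Z2 : ℚ⟦X⟧ := psum fun n => X ^ n * ((1 - X ^ n)⁻¹) ^ 2
noncomputable def Z3 : ℚ⟦X⟧ := psum fun n => X ^ n * (1 + X ^ n) * ((1 - X ^ n)⁻¹) ^ 3
noncomputable def Z4 : ℚ⟦X⟧ := psum fun n => X ^ (2 * n) * ((1 - X ^ n)⁻¹) ^ 4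

/- ### Auxiliary machinery -/

/-- The geometric series `∑_{k≥0} q^{nk}`. -/
noncomputable def G (n : ℕ) : ℚ⟦X⟧ := PowerSeries.mk fun m => if n ∣ m then 1 else 0

lemma coeff_G (n m : ℕ) : PowerSeries.coeff m (G n) = if n ∣ m then 1 else 0 :=
  coeff_mk _ _

lemma one_sub_mul_G (n : ℕ) (hn : 1 ≤ n) : ((1 : ℚ⟦X⟧) - X ^ n) * G n = 1 := by
  ext m
  rw [sub_mul, one_mul, map_sub, coeff_X_pow_mul']
  simp only [coeff_G, PowerSeries.coeff_one]
  rcases Nat.eq_zero_or_pos m with rfl | hm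
  · simp [show ¬ n ≤ 0 from by omega]
  · have hne : ¬ m = 0 := by omega
    by_cases hle : n ≤ m
    · have hiff : n ∣ m - n ↔ n ∣ m := ⟨fun h => by
        have h2 : (m - n) + n = m := Nat.sub_add_cancel hle
        exact h2 ▸ dvd_add h dvd_rfl, fun h => Nat.dvd_sub h dvd_rfl⟩
      simp only [if_pos hle, hiff, hne, if_false]
      ring
    · simp only [if_neg hle,
        if_neg (Nat.not_dvd_of_pos_of_lt hm (show m < n by omega)), hne, if_false]
      ring

lemma inv_eq_G (n : ℕ) (hn : 1 ≤ n) : ((1 : ℚ⟦X⟧) - X ^ n)⁻¹ = G n := by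
  have hc : constantCoeff ((1:ℚ⟦X⟧) - X ^ n) ≠ 0 := by
    rw [map_sub, map_one, map_pow, constantCoeff_X, zero_pow (by omega : n ≠ 0), sub_zero]
    norm_num
  rw [PowerSeries.inv_eq_iff_mul_eq_one hc, mul_comm]
  exact one_sub_mul_G n hn

lemma hockey (k : ℕ) : ∀ D : ℕ,
    ∑ a ∈ Finset.range (D+1), ((a + k).choose k) = (D + (k+1)).choose (k+1) := by
  intro D
  induction D with
  | zero => simp
  | succ D ih =>
    rw [Finset.sum_range_succ, ih]
    have : (D + 1 + (k+1)) = (D + (k+1)) + 1 := by omega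
    rw [this, Nat.choose_succ_succ (D + (k+1)) k]
    have h2 : D + 1 + k = D + (k+1) := by omega
    rw [h2]
    simp only [Nat.succ_eq_add_one]
    omega

lemma qc2 (d : ℕ) : ((d.choose 2 : ℕ) : ℚ) = ((d:ℚ)^2 - d)/2 := by
  induction d with
  | zero => norm_num
  | succ d ih =>
    rw [Nat.choose_succ_succ d 1, Nat.choose_one_right]
    push_cast
    rw [ih]
    ring

lemma qc3 (d : ℕ) : ((d.choose 3 : ℕ) : ℚ) = ((d:ℚ)^3 - 3*d^2 + 2*d)/6 := by
  induction d with
  | zero => norm_num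
  | succ d ih =>
    rw [Nat.choose_succ_succ d 2]
    push_cast
    rw [ih, qc2]
    ring

lemma G_pow (n : ℕ) (hn : 1 ≤ n) (k : ℕ) :
    G n ^ (k+1) = PowerSeries.mk fun m => if n ∣ m then (((m / n + k).choose k : ℕ) : ℚ) else 0 := by
  induction k with
  | zero =>
    ext m
    simp [pow_one, coeff_G]
  | succ k ih =>
    ext m
    rw [pow_succ', ih, PowerSeries.coeff_mul, coeff_mk]
    simp only [coeff_G, coeff_mk, ite_mul, one_mul, zero_mul]
    by_cases hd : n ∣ m
    · obtain ⟨D, rfl⟩ := hd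
      rw [Finset.Nat.sum_antidiagonal_eq_sum_range_succ_mk]
      dsimp only
      simp only [Nat.succ_eq_add_one]
      have key : ∑ i ∈ Finset.range (n*D+1),
            (if n ∣ i then (if n ∣ n*D - i then (((n*D - i)/n + k).choose k : ℚ) else 0) else 0)
          = ∑ a ∈ Finset.range (D+1), ((((D - a) + k).choose k : ℕ) : ℚ) := by
        rw [← Finset.sum_filter]
        apply Finset.sum_nbij' (fun i => i / n) (fun a => n * a)
        · intro i hi
          simp only [Finset.mem_filter, Finset.mem_range] at hi
          simp only [Finset.mem_range]
          have h1 : i / n ≤ (n*D) / n := Nat.div_le_div_right (by omega)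
          rw [Nat.mul_div_cancel_left D (by omega)] at h1
          omega
        · intro a ha
          simp only [Finset.mem_range] at ha
          simp only [Finset.mem_filter, Finset.mem_range]
          exact ⟨by nlinarith, dvd_mul_right n a⟩
        · intro i hi
          simp only [Finset.mem_filter] at hi
          exact Nat.mul_div_cancel' hi.2
        · intro a _
          exact Nat.mul_div_cancel_left a (by omega)
        · intro i hi
          simp only [Finset.mem_filter, Finset.mem_range] at hi
          obtain ⟨a, rfl⟩ := hi.2
          rw [if_pos (Nat.dvd_sub (dvd_mul_right n D) (dvd_mul_right n a))]
          rw [Nat.sub_mul_div (n*D) n a]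
          rw [Nat.mul_div_cancel_left D (by omega), Nat.mul_div_cancel_left a (by omega)]
      rw [key]
      rw [if_pos (dvd_mul_right n D), Nat.mul_div_cancel_left D (by omega)]
      have := Finset.sum_range_reflect (fun a => (((a + k).choose k : ℕ) : ℚ)) (D+1)
      simp only [Nat.add_sub_cancel] at this
      rw [this, ← Nat.cast_sum, hockey k D]
    · rw [if_neg hd]
      apply Finset.sum_eq_zero
      intro p hp
      rw [Finset.HasAntidiagonal.mem_antidiagonal] at hp
      by_cases h1 : n ∣ p.1
      · by_cases h2 : n ∣ p.2
        · exact absurd (hp ▸ dvd_add h1 h2) hd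
        · simp [h1, h2]
      · simp [h1]

lemma coeff_term (n j k m : ℕ) (hn : 1 ≤ n) :
    PowerSeries.coeff m ((X : ℚ⟦X⟧) ^ (j*n) * G n ^ (k+1)) =
      if n ∣ m ∧ j*n ≤ m then (((m/n - j + k).choose k : ℕ) : ℚ) else 0 := by
  rw [coeff_X_pow_mul', G_pow n hn k, coeff_mk]
  by_cases hle : j*n ≤ m
  · have hiff : n ∣ m - j*n ↔ n ∣ m := by
      constructor
      · intro h
        have h2 : (m - j*n) + j*n = m := Nat.sub_add_cancel hle
        exact h2 ▸ dvd_add h (Dvd.dvd.mul_left dvd_rfl j)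
      · intro h
        exact Nat.dvd_sub h (Dvd.dvd.mul_left dvd_rfl j)
    rw [if_pos hle]
    by_cases hd : n ∣ m
    · rw [if_pos (hiff.mpr hd), if_pos ⟨hd, hle⟩]
      congr 3
      rw [mul_comm j n, Nat.sub_mul_div m n j]
    · rw [if_neg (fun h => hd (hiff.mp h)), if_neg (by tauto)]
  · rw [if_neg hle, if_neg (by tauto)]

lemma innerSumQ (n m : ℕ) (hnm : n ∈ Finset.Icc 1 m) (g : ℕ → ℚ) :
    ∑ d ∈ Finset.Icc 1 m, (if m = n*d then g d else 0) = if n ∣ m then g (m/n) else 0 := by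
  simp only [Finset.mem_Icc] at hnm
  by_cases hd : n ∣ m
  · rw [if_pos hd]
    rw [Finset.sum_eq_single_of_mem (m/n)]
    · rw [if_pos (Nat.mul_div_cancel' hd).symm]
    · simp only [Finset.mem_Icc]
      refine ⟨(Nat.one_le_div_iff (by omega)).mpr hnm.2, Nat.div_le_self _ _⟩
    · intro b hb hbne
      rw [if_neg]
      intro he
      apply hbne
      rw [he, Nat.mul_div_cancel_left b (by omega)]
  · rw [if_neg hd]
    apply Finset.sum_eq_zero
    intro d _
    rw [if_neg]
    intro he
    exact hd ⟨d, he⟩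

lemma coeff_bracket (s m : ℕ) :
    PowerSeries.coeff m (bracket s) =
      (1 / ((s-1).factorial : ℚ)) *
        ∑ n ∈ Finset.Icc 1 m, (if n ∣ m then ((m/n : ℕ):ℚ)^(s-1) else 0) := by
  simp only [bracket, psum2, map_smul, coeff_mk, smul_eq_mul]
  congr 1
  rw [Finset.sum_product]
  refine Finset.sum_congr rfl fun n hn => ?_
  rw [← innerSumQ n m hn (fun d => ((d:ℕ):ℚ)^(s-1))]
  refine Finset.sum_congr rfl fun d _ => ?_
  dsimp only
  rw [PowerSeries.coeff_X_pow]
  split_ifs <;> simp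

/-- `Z(2) = [2]`, `Z(3) = 2·[3]`, and `Z(4) = [4] - (1/6)·[2]`. -/
theorem stmt2 :
    Z2 = bracket 2 ∧ Z3 = 2 • bracket 3 ∧ Z4 = bracket 4 - (1 / 6 : ℚ) • bracket 2 := by
  refine ⟨?_, ?_, ?_⟩
  · -- Z2 = bracket 2
    ext m
    rw [Z2, psum, coeff_mk, coeff_bracket]
    norm_num [Nat.factorial]
    refine Finset.sum_congr rfl fun n hn => ?_
    have hn' := Finset.mem_Icc.mp hn
    rw [inv_eq_G n hn'.1,
      show ((X:ℚ⟦X⟧) ^ n * G n ^ 2) = X ^ (1*n) * G n ^ (1+1) by rw [one_mul],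
      coeff_term n 1 1 m hn'.1]
    by_cases hd : n ∣ m
    · have h1 : 1 ≤ m / n := (Nat.one_le_div_iff (by omega)).mpr hn'.2
      rw [if_pos ⟨hd, by omega⟩, if_pos hd, show m/n - 1 + 1 = m/n from by omega,
        Nat.choose_one_right]
    · simp [hd]
  · -- Z3 = 2 • bracket 3
    ext m
    rw [Z3, psum, coeff_mk]
    have h2s : (PowerSeries.coeff m) ((2:ℕ) • bracket 3)
        = 2 * (PowerSeries.coeff m) (bracket 3) := by
      rw [two_smul, map_add, two_mul]
    rw [h2s, coeff_bracket]
    norm_num [Nat.factorial]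
    rw [← mul_assoc]
    norm_num
    refine Finset.sum_congr rfl fun n hn => ?_
    have hn' := Finset.mem_Icc.mp hn
    rw [inv_eq_G n hn'.1,
      show ((X:ℚ⟦X⟧) ^ n * (1 + X ^ n) * G n ^ 3)
          = X ^ (1*n) * G n ^ (2+1) + X ^ (2*n) * G n ^ (2+1) from by ring,
      map_add, coeff_term n 1 2 m hn'.1, coeff_term n 2 2 m hn'.1]
    by_cases hd : n ∣ m
    · have h1 : 1 ≤ m / n := (Nat.one_le_div_iff (by omega)).mpr hn'.2
      by_cases h2 : 2*n ≤ m
      · have hd2 : 2 ≤ m / n := (Nat.le_div_iff_mul_le (by omega)).mpr (by omega)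
        rw [if_pos (⟨hd, by omega⟩ : n ∣ m ∧ 1*n ≤ m), if_pos ⟨hd, h2⟩, if_pos hd,
          show m/n - 1 + 2 = m/n + 1 from by omega, show m/n - 2 + 2 = m/n from by omega,
          qc2, qc2]
        push_cast
        ring
      · have hd1 : m / n = 1 := by
          have h3 : ¬ 2 ≤ m / n := fun h => h2 (by
            have := (Nat.le_div_iff_mul_le (show 0 < n by omega)).mp h; omega)
          omega
        rw [if_pos (⟨hd, by omega⟩ : n ∣ m ∧ 1*n ≤ m), if_neg (by tauto), if_pos hd, hd1]
        norm_num
    · simp [hd]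
  · -- Z4
    ext m
    rw [Z4, psum, coeff_mk, map_sub, map_smul, coeff_bracket, coeff_bracket, smul_eq_mul]
    norm_num [Nat.factorial]
    rw [Finset.mul_sum, Finset.mul_sum, ← Finset.sum_sub_distrib]
    refine Finset.sum_congr rfl fun n hn => ?_
    have hn' := Finset.mem_Icc.mp hn
    rw [inv_eq_G n hn'.1,
      show ((X:ℚ⟦X⟧) ^ (2*n) * G n ^ 4) = X ^ (2*n) * G n ^ (3+1) from by norm_num,
      coeff_term n 2 3 m hn'.1]
    by_cases hd : n ∣ m
    · have h1 : 1 ≤ m / n := (Nat.one_le_div_iff (by omega)).mpr hn'.2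
      by_cases h2 : 2*n ≤ m
      · have hd2 : 2 ≤ m / n := (Nat.le_div_iff_mul_le (by omega)).mpr (by omega)
        rw [if_pos ⟨hd, h2⟩, if_pos hd, if_pos hd,
          show m/n - 2 + 3 = m/n + 1 from by omega, qc3]
        push_cast
        ring
      · have hd1 : m / n = 1 := by
          have h3 : ¬ 2 ≤ m / n := fun h => h2 (by
            have := (Nat.le_div_iff_mul_le (show 0 < n by omega)).mp h; omega)
          omega
        rw [if_neg (by tauto), if_pos hd, if_pos hd, hd1]
        norm_num
    · simp [hd]
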